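/- Let Φ : [d] → [B] be a partition of coordinates into blocks with block sizes d_b, and let L : ℝ^d → ℝ be twice differentiable and H-smooth blockwisely w.r.t. the (∞,2)-norm, i.e., for each block b, √(d_b)·‖∇_{(b)}L(x) - ∇_{(b)}L(y)‖₂ ≤ H_b · max_{b'} ‖(x-y)_{(b')}‖₂/√(d_{b'}) for all x,y. Then for any x and Δ ∈ ℝ^d, Δᵀ∇²L(x)Δ ≤ ∑_{b=1}^B (H_b/d_b)·‖Δ_{(b)}‖₂². -/

import Mathlib

/-- Coordinates belonging to block `b` of the partition `Φ`. -/
def blockIdx {d B : ℕ} (Φ : Fin d → Fin B) (b : Fin B) : Finset (Fin d) :=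
  Finset.univ.filter fun i => Φ i = b

/-- The size `d_b` of block `b`, as a real number. -/
noncomputable def dB {d B : ℕ} (Φ : Fin d → Fin B) (b : Fin B) : ℝ :=
  (blockIdx Φ b).card

/-- The `ℓ₂` norm of the restriction of `x` to block `b`. -/
noncomputable def blockNorm {d B : ℕ} (Φ : Fin d → Fin B) (b : Fin B) (x : Fin d → ℝ) : ℝ :=
  Real.sqrt (∑ i ∈ blockIdx Φ b, (x i) ^ 2)

/-- The `Φ`-norm `‖x‖_Φ = max_b ‖x_{(b)}‖₂ / √(d_b)`. -/
noncomputable def phiNorm {d B : ℕ} (Φ : Fin d → Fin B) (x : Fin d → ℝ) : ℝ :=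
  ⨆ b, blockNorm Φ b x / Real.sqrt (dB Φ b)

section aux
variable {d B : ℕ} (Φ : Fin d → Fin B)

lemma dB_nonneg (b : Fin B) : 0 ≤ dB Φ b := Nat.cast_nonneg _

lemma dB_pos {b : Fin B} (hb : (blockIdx Φ b).Nonempty) : 0 < dB Φ b := by
  have h := Finset.card_pos.mpr hb
  unfold dB
  exact_mod_cast h

lemma blockNorm_nonneg (b : Fin B) (z : Fin d → ℝ) : 0 ≤ blockNorm Φ b z :=
  Real.sqrt_nonneg _

lemma blockNorm_sq (b : Fin B) (z : Fin d → ℝ) :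
    blockNorm Φ b z ^ 2 = ∑ i ∈ blockIdx Φ b, (z i) ^ 2 :=
  Real.sq_sqrt (Finset.sum_nonneg fun i _ => sq_nonneg _)

lemma blockNorm_smul (b : Fin B) (c : ℝ) (z : Fin d → ℝ) :
    blockNorm Φ b (c • z) = |c| * blockNorm Φ b z := by
  unfold blockNorm
  rw [← Real.sqrt_sq_eq_abs, ← Real.sqrt_mul (sq_nonneg c), Finset.mul_sum]
  congr 1
  refine Finset.sum_congr rfl fun i _ => ?_
  simp [mul_pow]

lemma blockNorm_continuous (b : Fin B) : Continuous (blockNorm Φ b) := by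
  apply Real.continuous_sqrt.comp
  exact continuous_finset_sum _ fun i _ => (continuous_apply i).pow 2

lemma blockCS (b : Fin B) (f g : Fin d → ℝ) :
    ∑ i ∈ blockIdx Φ b, f i * g i ≤ blockNorm Φ b f * blockNorm Φ b g := by
  have h := Finset.sum_mul_sq_le_sq_mul_sq (blockIdx Φ b) f g
  have h2 : (∑ i ∈ blockIdx Φ b, f i * g i) ≤
      Real.sqrt ((∑ i ∈ blockIdx Φ b, f i ^ 2) * ∑ i ∈ blockIdx Φ b, g i ^ 2) := by
    calc (∑ i ∈ blockIdx Φ b, f i * g i) ≤ |∑ i ∈ blockIdx Φ b, f i * g i| := le_abs_self _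
    _ = Real.sqrt ((∑ i ∈ blockIdx Φ b, f i * g i) ^ 2) := (Real.sqrt_sq_eq_abs _).symm
    _ ≤ _ := Real.sqrt_le_sqrt h
  rwa [Real.sqrt_mul (Finset.sum_nonneg fun i _ => sq_nonneg _)] at h2

lemma phiNorm_nonneg (z : Fin d → ℝ) : 0 ≤ phiNorm Φ z :=
  Real.iSup_nonneg fun b => div_nonneg (blockNorm_nonneg Φ b z) (Real.sqrt_nonneg _)

lemma blockNorm_le_phiNorm (b : Fin B) (z : Fin d → ℝ) :
    blockNorm Φ b z / Real.sqrt (dB Φ b) ≤ phiNorm Φ z :=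
  le_ciSup (Set.Finite.bddAbove (Set.finite_range
    (fun b => blockNorm Φ b z / Real.sqrt (dB Φ b)))) b

end aux

section aux2
variable {d B : ℕ} (Φ : Fin d → Fin B)

lemma phiNorm_smul {c : ℝ} (hc : 0 ≤ c) (v : Fin d → ℝ) :
    phiNorm Φ (c • v) = c * phiNorm Φ v := by
  unfold phiNorm
  rw [Real.mul_iSup_of_nonneg hc]
  congr 1; funext b
  rw [blockNorm_smul, abs_of_nonneg hc, mul_div_assoc]

lemma hessBound {grad : (Fin d → ℝ) → (Fin d → ℝ)}
    {Hess : (Fin d → ℝ) → Matrix (Fin d) (Fin d) ℝ} {H : Fin B → ℝ}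
    (hhess : ∀ x, HasFDerivAt grad ((Hess x).mulVecLin.toContinuousLinearMap) x)
    (hsmooth : ∀ b x y, Real.sqrt (dB Φ b) * blockNorm Φ b (grad x - grad y)
      ≤ H b * phiNorm Φ (x - y))
    (x v : Fin d → ℝ) (b : Fin B) :
    Real.sqrt (dB Φ b) * blockNorm Φ b ((Hess x).mulVec v) ≤ H b * phiNorm Φ v := by
  have hline : HasDerivAt (fun t : ℝ => x + t • v) v 0 := by
    simpa using ((hasDerivAt_id (0:ℝ)).smul_const v).const_add x
  have hg : HasDerivAt (fun t : ℝ => grad (x + t • v)) ((Hess x).mulVec v) 0 := by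
    have h0 : HasFDerivAt grad ((Hess x).mulVecLin.toContinuousLinearMap)
        (x + (0:ℝ) • v) := by simpa using hhess x
    have h1 := h0.comp_hasDerivAt 0 hline
    simp at h1; exact h1
  rw [hasDerivAt_iff_tendsto_slope] at hg
  have hg2 : Filter.Tendsto
      (fun t => Real.sqrt (dB Φ b) *
        blockNorm Φ b (slope (fun s : ℝ => grad (x + s • v)) 0 t))
      (nhdsWithin 0 (Set.Ioi 0))
      (nhds (Real.sqrt (dB Φ b) * blockNorm Φ b ((Hess x).mulVec v))) := by
    exact (continuous_const.mul (blockNorm_continuous Φ b)).continuousAt.tendsto.comp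
      (hg.mono_left (nhdsWithin_mono 0 fun t ht => ne_of_gt ht))
  refine le_of_tendsto hg2 ?_
  filter_upwards [self_mem_nhdsWithin] with t ht
  have ht' : (0:ℝ) < t := ht
  have hslope : slope (fun s : ℝ => grad (x + s • v)) 0 t
      = t⁻¹ • (grad (x + t • v) - grad x) := by
    rw [slope_def_module]
    simp
  rw [hslope, blockNorm_smul, abs_of_nonneg (inv_nonneg.mpr ht'.le)]
  have hsm := hsmooth b (x + t • v) x
  have hxy : (x + t • v) - x = t • v := by ext i; simp
  rw [hxy, phiNorm_smul Φ ht'.le] at hsm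
  calc Real.sqrt (dB Φ b) * (t⁻¹ * blockNorm Φ b (grad (x + t • v) - grad x))
      = t⁻¹ * (Real.sqrt (dB Φ b) * blockNorm Φ b (grad (x + t • v) - grad x)) := by ring
    _ ≤ t⁻¹ * (H b * (t * phiNorm Φ v)) := by
        apply mul_le_mul_of_nonneg_left hsm (inv_nonneg.mpr ht'.le)
    _ = H b * phiNorm Φ v := by field_simp

end aux2

section aux3
variable {d : ℕ}

lemma hessSymm {L : (Fin d → ℝ) → ℝ} {grad : (Fin d → ℝ) → (Fin d → ℝ)}
    {Hess : (Fin d → ℝ) → Matrix (Fin d) (Fin d) ℝ}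
    (hderiv : ∀ x, HasFDerivAt L
      (∑ i, grad x i • (ContinuousLinearMap.proj i : (Fin d → ℝ) →L[ℝ] ℝ)) x)
    (hhess : ∀ x, HasFDerivAt grad ((Hess x).mulVecLin.toContinuousLinearMap) x)
    (x v w : Fin d → ℝ) :
    dotProduct w ((Hess x).mulVec v) = dotProduct v ((Hess x).mulVec w) := by
  classical
  let ιlin : (Fin d → ℝ) →ₗ[ℝ] ((Fin d → ℝ) →L[ℝ] ℝ) :=
    { toFun := fun g => ∑ i, g i • (ContinuousLinearMap.proj i : (Fin d → ℝ) →L[ℝ] ℝ)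
      map_add' := fun g h => by simp [add_smul, Finset.sum_add_distrib]
      map_smul' := fun c g => by simp [smul_smul, Finset.smul_sum] }
  let ι := ιlin.toContinuousLinearMap
  have hf' : HasFDerivAt (fun y => ∑ i, grad y i •
      (ContinuousLinearMap.proj i : (Fin d → ℝ) →L[ℝ] ℝ))
      (ι.comp ((Hess x).mulVecLin.toContinuousLinearMap)) x := by
    have h := ι.hasFDerivAt.comp x (hhess x)
    exact h
  have hsymm := second_derivative_symmetric hderiv hf' v w
  simp only [ContinuousLinearMap.comp_apply, ι, ιlin,
    LinearMap.coe_toContinuousLinearMap', Matrix.mulVecLin_apply,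
    LinearMap.coe_mk, AddHom.coe_mk, ContinuousLinearMap.sum_apply,
    ContinuousLinearMap.smul_apply, ContinuousLinearMap.proj_apply] at hsymm
  unfold dotProduct
  calc ∑ i, w i * (Hess x).mulVec v i
      = ∑ i, (Hess x).mulVec v i • w i := by
        refine Finset.sum_congr rfl fun i _ => ?_; simp [mul_comm]
    _ = ∑ i, (Hess x).mulVec w i • v i := hsymm
    _ = ∑ i, v i * (Hess x).mulVec w i := by
        refine Finset.sum_congr rfl fun i _ => ?_; simp [mul_comm]

end aux3

section aux4
variable {d B : ℕ} (Φ : Fin d → Fin B)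

/-- Restriction of a vector to block `b`. -/
def Pb (b : Fin B) (z : Fin d → ℝ) : Fin d → ℝ := fun i => if Φ i = b then z i else 0

lemma sum_Pb (z : Fin d → ℝ) : ∑ b, Pb Φ b z = z := by
  funext i
  have : (∑ b, Pb Φ b z) i = ∑ b, Pb Φ b z i := by
    simp [Finset.sum_apply]
  rw [this]
  simp [Pb]

lemma dot_Pb (b : Fin B) (u w : Fin d → ℝ) :
    dotProduct (Pb Φ b u) w = ∑ i ∈ blockIdx Φ b, u i * w i := by
  unfold dotProduct Pb blockIdx
  rw [Finset.sum_filter]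
  refine Finset.sum_congr rfl fun i _ => ?_
  by_cases h : Φ i = b <;> simp [h]

lemma dot_Pb_le (b : Fin B) (u w : Fin d → ℝ) :
    dotProduct (Pb Φ b u) w ≤ blockNorm Φ b u * blockNorm Φ b w := by
  rw [dot_Pb]
  exact blockCS Φ b u w

lemma blockNorm_sq_block (b : Fin B) (w : Fin d → ℝ) :
    ∑ i ∈ blockIdx Φ b, (w i) ^ 2 = blockNorm Φ b w ^ 2 :=
  (blockNorm_sq Φ b w).symm

end aux4

lemma algMain {d B : ℕ} (Φ : Fin d → Fin B) (hblocks : ∀ b, (blockIdx Φ b).Nonempty)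
    (hB : Nonempty (Fin B))
    (M : Matrix (Fin d) (Fin d) ℝ) (H : Fin B → ℝ) (Hnn : ∀ b, 0 ≤ H b)
    (hsym : ∀ v w : Fin d → ℝ,
      dotProduct w (M.mulVec v) = dotProduct v (M.mulVec w))
    (hMv : ∀ (v : Fin d → ℝ) (b : Fin B),
      Real.sqrt (dB Φ b) * blockNorm Φ b (M.mulVec v) ≤ H b * phiNorm Φ v)
    (Δ : Fin d → ℝ) :
    dotProduct Δ (M.mulVec Δ) ≤ ∑ b, H b / dB Φ b * (blockNorm Φ b Δ) ^ 2 := by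
  classical
  set q : Fin B → Fin B → ℝ :=
    fun b b' => dotProduct (Pb Φ b Δ) (M.mulVec (Pb Φ b' Δ)) with hq_def
  set r : Fin B → Fin B → ℝ :=
    fun b b' => blockNorm Φ b' (M.mulVec (Pb Φ b Δ)) with hr_def
  have sqrt_dB_pos : ∀ b, 0 < Real.sqrt (dB Φ b) :=
    fun b => Real.sqrt_pos.mpr (dB_pos Φ (hblocks b))
  -- key row estimate
  have key : ∀ b, ∑ b', Real.sqrt (dB Φ b') * r b b'
      ≤ H b * blockNorm Φ b Δ / Real.sqrt (dB Φ b) := by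
    intro b
    set w : Fin d → ℝ := M.mulVec (Pb Φ b Δ) with hw_def
    set v : Fin d → ℝ := fun i =>
      if r b (Φ i) = 0 then 0 else Real.sqrt (dB Φ (Φ i)) * w i / r b (Φ i) with hv_def
    have hwsq : ∀ b', ∑ i ∈ blockIdx Φ b', (w i) ^ 2 = r b b' ^ 2 :=
      fun b' => (blockNorm_sq Φ b' w).symm
    have hrnn : ∀ b', 0 ≤ r b b' := fun b' => blockNorm_nonneg Φ b' w
    have hmem : ∀ b', ∀ i ∈ blockIdx Φ b', Φ i = b' := by
      intro b' i hi
      exact (Finset.mem_filter.mp hi).2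
    -- block sums of v * w
    have hvw : ∀ b', ∑ i ∈ blockIdx Φ b', v i * w i = Real.sqrt (dB Φ b') * r b b' := by
      intro b'
      by_cases hr0 : r b b' = 0
      · have hw0 : ∀ i ∈ blockIdx Φ b', w i = 0 := by
          intro i hi
          have h0 : ∑ i ∈ blockIdx Φ b', (w i) ^ 2 = 0 := by rw [hwsq, hr0]; ring
          have := (Finset.sum_eq_zero_iff_of_nonneg (fun i _ => sq_nonneg (w i))).mp h0 i hi
          exact pow_eq_zero_iff (n := 2) (by norm_num) |>.mp this
        rw [hr0, mul_zero]
        refine Finset.sum_eq_zero fun i hi => by rw [hw0 i hi, mul_zero]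
      · have hstep : ∀ i ∈ blockIdx Φ b',
            v i * w i = Real.sqrt (dB Φ b') * (w i) ^ 2 / r b b' := by
          intro i hi
          rw [hv_def]
          simp only [hmem b' i hi, hr0, if_false]
          ring
        rw [Finset.sum_congr rfl hstep, ← Finset.sum_div, ← Finset.mul_sum, hwsq]
        field_simp
      -- block norms of v
    have hbv : ∀ b', blockNorm Φ b' v ≤ Real.sqrt (dB Φ b') := by
      intro b'
      by_cases hr0 : r b b' = 0
      · have : ∀ i ∈ blockIdx Φ b', (v i) ^ 2 = 0 := by
          intro i hi
          rw [hv_def]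
          simp [hmem b' i hi, hr0]
        unfold blockNorm
        rw [Finset.sum_eq_zero this, Real.sqrt_zero]
        exact Real.sqrt_nonneg _
      · have hstep : ∀ i ∈ blockIdx Φ b',
            (v i) ^ 2 = dB Φ b' * (w i) ^ 2 / r b b' ^ 2 := by
          intro i hi
          rw [hv_def]
          simp only [hmem b' i hi, hr0, if_false]
          rw [div_pow, mul_pow, Real.sq_sqrt (le_of_lt (dB_pos Φ (hblocks b')))]
        unfold blockNorm
        rw [Finset.sum_congr rfl hstep, ← Finset.sum_div, ← Finset.mul_sum, hwsq]
        rw [mul_div_assoc, div_self (pow_ne_zero 2 hr0), mul_one]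
    have hphi : phiNorm Φ v ≤ 1 := by
      refine ciSup_le fun b' => ?_
      rw [div_le_one (sqrt_dB_pos b')]
      exact hbv b'
    -- assemble
    have h1 : ∑ b', Real.sqrt (dB Φ b') * r b b' = dotProduct v w := by
      unfold dotProduct
      rw [← Finset.sum_fiberwise Finset.univ Φ (fun i => v i * w i)]
      show ∑ b' : Fin B, Real.sqrt (dB Φ b') * r b b'
          = ∑ b' : Fin B, ∑ i ∈ blockIdx Φ b', v i * w i
      exact Finset.sum_congr rfl fun b' _ => (hvw b').symm
    have h2 : dotProduct v w = dotProduct (Pb Φ b Δ) (M.mulVec v) := by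
      rw [hw_def]; exact hsym (Pb Φ b Δ) v
    have h3 : dotProduct (Pb Φ b Δ) (M.mulVec v)
        ≤ blockNorm Φ b Δ * blockNorm Φ b (M.mulVec v) := dot_Pb_le Φ b Δ (M.mulVec v)
    have h4 : blockNorm Φ b (M.mulVec v) ≤ H b / Real.sqrt (dB Φ b) := by
      rw [le_div_iff₀ (sqrt_dB_pos b), mul_comm]
      calc Real.sqrt (dB Φ b) * blockNorm Φ b (M.mulVec v) ≤ H b * phiNorm Φ v := hMv v b
        _ ≤ H b * 1 := mul_le_mul_of_nonneg_left hphi (Hnn b)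
        _ = H b := mul_one _
    calc ∑ b', Real.sqrt (dB Φ b') * r b b'
        = dotProduct (Pb Φ b Δ) (M.mulVec v) := by rw [h1, h2]
      _ ≤ blockNorm Φ b Δ * blockNorm Φ b (M.mulVec v) := h3
      _ ≤ blockNorm Φ b Δ * (H b / Real.sqrt (dB Φ b)) :=
          mul_le_mul_of_nonneg_left h4 (blockNorm_nonneg Φ b Δ)
      _ = H b * blockNorm Φ b Δ / Real.sqrt (dB Φ b) := by ring
  -- pairwise estimate
  set T : Fin B → Fin B → ℝ := fun b b' =>
    blockNorm Φ b Δ / Real.sqrt (dB Φ b) * (Real.sqrt (dB Φ b') * r b b') with hT_def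
  have hq_symm : ∀ b b', q b b' = q b' b := by
    intro b b'
    exact hsym (Pb Φ b' Δ) (Pb Φ b Δ)
  have pair : ∀ b b', 2 * q b b' ≤ T b b' + T b' b := by
    intro b b'
    have hqA : q b b' ≤ blockNorm Φ b' Δ * r b b' := by
      rw [hq_symm b b']
      exact dot_Pb_le Φ b' Δ (M.mulVec (Pb Φ b Δ))
    have hqB : q b b' ≤ blockNorm Φ b Δ * r b' b :=
      dot_Pb_le Φ b Δ (M.mulVec (Pb Φ b' Δ))
    have hrnn1 : 0 ≤ r b b' := blockNorm_nonneg Φ b' _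
    have hrnn2 : 0 ≤ r b' b := blockNorm_nonneg Φ b _
    have hTnn : 0 ≤ T b b' + T b' b := by
      have t1 : 0 ≤ T b b' := by
        apply mul_nonneg
        · exact div_nonneg (blockNorm_nonneg Φ b Δ) (Real.sqrt_nonneg _)
        · exact mul_nonneg (Real.sqrt_nonneg _) hrnn1
      have t2 : 0 ≤ T b' b := by
        apply mul_nonneg
        · exact div_nonneg (blockNorm_nonneg Φ b' Δ) (Real.sqrt_nonneg _)
        · exact mul_nonneg (Real.sqrt_nonneg _) hrnn2
      linarith
    by_cases hq0 : q b b' ≤ 0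
    · linarith
    push_neg at hq0
    have hnb' : 0 < blockNorm Φ b' Δ := by
      rcases (blockNorm_nonneg Φ b' Δ).lt_or_eq with h | h
      · exact h
      · exfalso; rw [← h, zero_mul] at hqA; linarith
    have hnb : 0 < blockNorm Φ b Δ := by
      rcases (blockNorm_nonneg Φ b Δ).lt_or_eq with h | h
      · exact h
      · exfalso; rw [← h, zero_mul] at hqB; linarith
    -- normalized quantities
    set ab : ℝ := blockNorm Φ b Δ / Real.sqrt (dB Φ b) with hab_def
    set ab' : ℝ := blockNorm Φ b' Δ / Real.sqrt (dB Φ b') with hab'_def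
    have habpos : 0 < ab := div_pos hnb (sqrt_dB_pos b)
    have hab'pos : 0 < ab' := div_pos hnb' (sqrt_dB_pos b')
    have hnb_eq : blockNorm Φ b Δ = ab * Real.sqrt (dB Φ b) := by
      rw [hab_def, div_mul_cancel₀]
      exact (sqrt_dB_pos b).ne'
    have hnb'_eq : blockNorm Φ b' Δ = ab' * Real.sqrt (dB Φ b') := by
      rw [hab'_def, div_mul_cancel₀]
      exact (sqrt_dB_pos b').ne'
    set A : ℝ := Real.sqrt (dB Φ b') * r b b' with hA_def
    set A' : ℝ := Real.sqrt (dB Φ b) * r b' b with hA'_def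
    have hqA2 : q b b' ≤ ab' * A := by
      rw [hA_def]
      calc q b b' ≤ blockNorm Φ b' Δ * r b b' := hqA
        _ = ab' * (Real.sqrt (dB Φ b') * r b b') := by rw [hnb'_eq]; ring
    have hqB2 : q b b' ≤ ab * A' := by
      rw [hA'_def]
      calc q b b' ≤ blockNorm Φ b Δ * r b' b := hqB
        _ = ab * (Real.sqrt (dB Φ b) * r b' b) := by rw [hnb_eq]; ring
    have hgoal : 2 * q b b' ≤ ab * A + ab' * A' := by
      have hmul : 2 * q b b' * (ab * ab') ≤ (ab * A + ab' * A') * (ab * ab') := by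
        nlinarith [mul_le_mul_of_nonneg_left hqA2 (sq_nonneg ab),
          mul_le_mul_of_nonneg_left hqB2 (sq_nonneg ab'),
          mul_nonneg hq0.le (sq_nonneg (ab - ab')), mul_pos habpos hab'pos]
      exact le_of_mul_le_mul_right hmul (mul_pos habpos hab'pos)
    calc 2 * q b b' ≤ ab * A + ab' * A' := hgoal
      _ = T b b' + T b' b := by rw [hT_def]
  -- expansion of the quadratic form
  have expand : dotProduct Δ (M.mulVec Δ) = ∑ b, ∑ b', q b b' := by
    have h1 : M.mulVec Δ = ∑ b', M.mulVec (Pb Φ b' Δ) := by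
      have h := map_sum M.mulVecLin (fun b' => Pb Φ b' Δ) Finset.univ
      simp only [Matrix.mulVecLin_apply] at h
      rw [sum_Pb] at h
      exact h
    calc dotProduct Δ (M.mulVec Δ)
        = ∑ i, Δ i * (M.mulVec Δ) i := rfl
      _ = ∑ i, ∑ b, (Pb Φ b Δ) i * (M.mulVec Δ) i := by
          refine Finset.sum_congr rfl fun i _ => ?_
          rw [← Finset.sum_mul]
          congr 1
          have h2 := congrFun (sum_Pb Φ Δ) i
          rw [← h2]
          simp
      _ = ∑ b, ∑ i, (Pb Φ b Δ) i * (M.mulVec Δ) i := Finset.sum_comm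
      _ = ∑ b, ∑ b', q b b' := by
          refine Finset.sum_congr rfl fun b _ => ?_
          calc ∑ i, (Pb Φ b Δ) i * (M.mulVec Δ) i
              = ∑ i, ∑ b', (Pb Φ b Δ) i * (M.mulVec (Pb Φ b' Δ)) i := by
                refine Finset.sum_congr rfl fun i _ => ?_
                rw [h1]
                have h3 : (∑ b', M.mulVec (Pb Φ b' Δ)) i
                    = ∑ b', (M.mulVec (Pb Φ b' Δ)) i := by simp
                rw [h3, Finset.mul_sum]
            _ = ∑ b', ∑ i, (Pb Φ b Δ) i * (M.mulVec (Pb Φ b' Δ)) i := Finset.sum_comm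
            _ = ∑ b', q b b' := rfl
  -- sum it all up
  have sumT : ∑ b, ∑ b', q b b' ≤ ∑ b, ∑ b', T b b' := by
    have h2 : ∑ b, ∑ b', (2 : ℝ) * q b b' ≤ ∑ b, ∑ b', (T b b' + T b' b) :=
      Finset.sum_le_sum fun b _ => Finset.sum_le_sum fun b' _ => pair b b'
    have h3 : ∑ b, ∑ b', (2 : ℝ) * q b b' = 2 * ∑ b, ∑ b', q b b' := by
      rw [Finset.mul_sum]
      exact Finset.sum_congr rfl fun b _ => (Finset.mul_sum _ _ _).symm
    have h4 : ∑ b, ∑ b', (T b b' + T b' b) = 2 * ∑ b, ∑ b', T b b' := by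
      have hs : ∑ b, ∑ b', T b' b = ∑ b, ∑ b', T b b' := Finset.sum_comm
      calc ∑ b, ∑ b', (T b b' + T b' b)
          = ∑ b, (∑ b', T b b' + ∑ b', T b' b) :=
            Finset.sum_congr rfl fun b _ => Finset.sum_add_distrib
        _ = (∑ b, ∑ b', T b b') + ∑ b, ∑ b', T b' b := Finset.sum_add_distrib
        _ = 2 * ∑ b, ∑ b', T b b' := by rw [hs]; ring
    linarith
  calc dotProduct Δ (M.mulVec Δ)
      = ∑ b, ∑ b', q b b' := expand
    _ ≤ ∑ b, ∑ b', T b b' := sumT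
    _ ≤ ∑ b, H b / dB Φ b * (blockNorm Φ b Δ) ^ 2 := by
        refine Finset.sum_le_sum fun b _ => ?_
        have hTb : ∑ b', T b b'
            = blockNorm Φ b Δ / Real.sqrt (dB Φ b) * ∑ b', Real.sqrt (dB Φ b') * r b b' := by
          rw [Finset.mul_sum]
        have hle : ∑ b', T b b'
            ≤ blockNorm Φ b Δ / Real.sqrt (dB Φ b)
              * (H b * blockNorm Φ b Δ / Real.sqrt (dB Φ b)) := by
          rw [hTb]
          exact mul_le_mul_of_nonneg_left (key b)
            (div_nonneg (blockNorm_nonneg Φ b Δ) (Real.sqrt_nonneg _))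
        refine hle.trans (le_of_eq ?_)
        have hd : Real.sqrt (dB Φ b) * Real.sqrt (dB Φ b) = dB Φ b :=
          Real.mul_self_sqrt (dB_pos Φ (hblocks b)).le
        rw [← hd]
        have hne : Real.sqrt (dB Φ b) ≠ 0 := (sqrt_dB_pos b).ne'
        field_simp
        rw [Real.sq_sqrt (sq_nonneg _)]

/-- blockwise `(∞,2)`-smoothness bounds the Hessian quadratic form. -/
theorem stmt_7 (d B : ℕ) (Φ : Fin d → Fin B) (hblocks : ∀ b, (blockIdx Φ b).Nonempty)
    (L : (Fin d → ℝ) → ℝ) (grad : (Fin d → ℝ) → (Fin d → ℝ))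
    (Hess : (Fin d → ℝ) → Matrix (Fin d) (Fin d) ℝ) (H : Fin B → ℝ)
    (hderiv : ∀ x, HasFDerivAt L
      (∑ i, grad x i • (ContinuousLinearMap.proj i : (Fin d → ℝ) →L[ℝ] ℝ)) x)
    (hhess : ∀ x, HasFDerivAt grad ((Hess x).mulVecLin.toContinuousLinearMap) x)
    (hsmooth : ∀ b x y, Real.sqrt (dB Φ b) * blockNorm Φ b (grad x - grad y)
      ≤ H b * phiNorm Φ (x - y)) :
    ∀ (x Δ : Fin d → ℝ),
      dotProduct Δ ((Hess x).mulVec Δ) ≤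
        ∑ b, H b / dB Φ b * (blockNorm Φ b Δ) ^ 2 := by
  intro x Δ
  rcases Nat.eq_zero_or_pos B with hB0 | hBpos
  · subst hB0
    haveI : IsEmpty (Fin d) := ⟨fun i => (Φ i).elim0⟩
    simp [dotProduct]
  · haveI hB : Nonempty (Fin B) := Fin.pos_iff_nonempty.mp hBpos
    have Hnn : ∀ b, 0 ≤ H b := by
      intro b
      obtain ⟨i₀, hi₀⟩ := hblocks b
      set e : Fin d → ℝ := fun i => if i = i₀ then 1 else 0 with he_def
      have hbn : blockNorm Φ b e = 1 := by
        unfold blockNorm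
        have hsum : ∑ i ∈ blockIdx Φ b, (e i) ^ 2 = 1 := by
          have hstep : ∀ i ∈ blockIdx Φ b, (e i) ^ 2 = if i = i₀ then 1 else 0 := by
            intro i _
            rw [he_def]
            by_cases h : i = i₀ <;> simp [h]
          rw [Finset.sum_congr rfl hstep, Finset.sum_ite_eq' (blockIdx Φ b) i₀ (fun _ => 1)]
          simp [hi₀]
        rw [hsum, Real.sqrt_one]
      have hple : 1 / Real.sqrt (dB Φ b) ≤ phiNorm Φ e := by
        rw [← hbn]
        exact blockNorm_le_phiNorm Φ b e
      have hpos : 0 < phiNorm Φ e := by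
        refine lt_of_lt_of_le ?_ hple
        have := Real.sqrt_pos.mpr (dB_pos Φ (hblocks b))
        positivity
      have hs := hsmooth b e 0
      rw [sub_zero] at hs
      have hl : 0 ≤ Real.sqrt (dB Φ b) * blockNorm Φ b (grad e - grad 0) :=
        mul_nonneg (Real.sqrt_nonneg _) (blockNorm_nonneg Φ b _)
      nlinarith [le_trans hl hs]
    exact algMain Φ hblocks hB (Hess x) H Hnn (hessSymm hderiv hhess x)
      (fun v b => hessBound Φ hhess hsmooth x v b) Δ
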